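/- Let k be a field, R = k[X], L = R[1/X], and let D be the X-power-torsion submodule of the k-linear dual Hom_k(R, k). Then the canonical map ⨁_{n∈ℕ} Hom_R(L, D) → Hom_R(L, ⨁_{n∈ℕ} D) is not surjective. -/

import Mathlib

set_option maxHeartbeats 1000000
set_option synthInstance.maxHeartbeats 1000000


section KDual

variable (k : Type) [CommSemiring k] (A : Type) [CommSemiring A] [Algebra k A]

/-- The `k`-linear dual `Hom_k(A, k)` of a commutative `k`-algebra `A`, regarded as an
`A`-module via `(a • f) b = f (a * b)`. -/
def KDual : Type := A →ₗ[k] k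

instance : AddCommMonoid (KDual k A) :=
  inferInstanceAs (AddCommMonoid (A →ₗ[k] k))

instance : Module A (KDual k A) where
  smul a f := (f : A →ₗ[k] k).comp (LinearMap.mulLeft k a)
  one_smul f := by
    show (f : A →ₗ[k] k).comp (LinearMap.mulLeft k 1) = f
    ext b; show DFunLike.coe (F := A →ₗ[k] k) f (1 * b) = DFunLike.coe (F := A →ₗ[k] k) f b; rw [one_mul]
  mul_smul a b f := by
    show (f : A →ₗ[k] k).comp (LinearMap.mulLeft k (a * b)) =
      ((f : A →ₗ[k] k).comp (LinearMap.mulLeft k b)).comp (LinearMap.mulLeft k a)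
    ext c
    show DFunLike.coe (F := A →ₗ[k] k) f (a * b * c) = DFunLike.coe (F := A →ₗ[k] k) f (b * (a * c))
    rw [mul_left_comm, mul_assoc]
  smul_zero a := by
    show (0 : A →ₗ[k] k).comp (LinearMap.mulLeft k a) = 0
    ext b; simp
  smul_add a f g := by
    show ((f + g : A →ₗ[k] k)).comp (LinearMap.mulLeft k a) =
      (f : A →ₗ[k] k).comp (LinearMap.mulLeft k a) + (g : A →ₗ[k] k).comp (LinearMap.mulLeft k a)
    ext b; rfl
  add_smul a b f := by
    show (f : A →ₗ[k] k).comp (LinearMap.mulLeft k (a + b)) =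
      (f : A →ₗ[k] k).comp (LinearMap.mulLeft k a) + (f : A →ₗ[k] k).comp (LinearMap.mulLeft k b)
    ext c
    show DFunLike.coe (F := A →ₗ[k] k) f ((a + b) * c) = DFunLike.coe (F := A →ₗ[k] k) f (a * c) + DFunLike.coe (F := A →ₗ[k] k) f (b * c)
    rw [add_mul]; exact LinearMap.map_add (f : A →ₗ[k] k) _ _
  zero_smul f := by
    show (f : A →ₗ[k] k).comp (LinearMap.mulLeft k 0) = 0
    ext b
    show DFunLike.coe (F := A →ₗ[k] k) f (0 * b) = 0
    rw [zero_mul]; exact LinearMap.map_zero (f : A →ₗ[k] k)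

end KDual

section PowerTorsion

variable (R : Type) [CommRing R] (r : R) (M : Type) [AddCommMonoid M] [Module R M]

/-- The submodule of elements annihilated by some power of `r`. -/
def powerTorsion : Submodule R M where
  carrier := {x | ∃ n : ℕ, r ^ n • x = 0}
  zero_mem' := ⟨0, smul_zero _⟩
  add_mem' := by
    rintro x y ⟨n, hn⟩ ⟨m, hm⟩
    refine ⟨n + m, ?_⟩
    have hx : r ^ (n + m) • x = 0 := by
      rw [pow_add, mul_comm, mul_smul, hn, smul_zero]
    have hy : r ^ (n + m) • y = 0 := by
      rw [pow_add, mul_smul, hm, smul_zero]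
    rw [smul_add, hx, hy, add_zero]
  smul_mem' := by
    rintro c x ⟨n, hn⟩
    exact ⟨n, by rw [smul_smul, mul_comm, ← smul_smul, hn, smul_zero]⟩

end PowerTorsion


namespace Stmt16Aux

open Polynomial LaurentPolynomial

variable (k : Type) [Field k]

noncomputable section

local notation "R" => Polynomial k
local notation "L" => Localization.Away (Polynomial.X : Polynomial k)
local notation "Dsub" => powerTorsion (Polynomial k) Polynomial.X (KDual k (Polynomial k))

instance : IsLocalization (Submonoid.powers (Polynomial.X : Polynomial k))
    (LaurentPolynomial k) :=
  LaurentPolynomial.isLocalization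

/-- The localization `k[X][1/X]` is isomorphic to Laurent polynomials. -/
def e : L ≃ₐ[Polynomial k] LaurentPolynomial k :=
  IsLocalization.algEquiv (Submonoid.powers (Polynomial.X : Polynomial k)) _ _

/-- Coefficient of `T^(-n-1)`, as a `k`-linear functional on Laurent polynomials. -/
def cf (n : ℕ) : LaurentPolynomial k →ₗ[k] k where
  toFun p := p.coeff (-(n : ℤ) - 1)
  map_add' p q := Finsupp.add_apply p.coeff q.coeff _
  map_smul' c p := Finsupp.smul_apply c p.coeff (-(n : ℤ) - 1)

lemma toLaurent_apply_neg (p : Polynomial k) (i : ℤ) (hi : i < 0) :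
    (Polynomial.toLaurent p).coeff i = 0 := by
  rw [← Finsupp.notMem_support_iff, support_coeff_toLaurent]
  intro h
  simp only [Finset.mem_map] at h
  obtain ⟨m, -, hm⟩ := h
  simp at hm
  omega

lemma cf_toLaurent (n : ℕ) (p : Polynomial k) : cf k n (Polynomial.toLaurent p) = 0 :=
  toLaurent_apply_neg k p _ (by omega)

/-- The `n`-th component map `L → Hom_k(R,k)`. -/
def psiRaw (n : ℕ) : L →ₗ[Polynomial k] KDual k (Polynomial k) where
  toFun ℓ := show Polynomial k →ₗ[k] k from
    (cf k n).comp ((LinearMap.mulLeft k (e k ℓ)).comp Polynomial.toLaurentAlg.toLinearMap)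
  map_add' x y := by
    show (cf k n).comp ((LinearMap.mulLeft k (e k (x + y))).comp
        Polynomial.toLaurentAlg.toLinearMap) = _
    show _ = ((cf k n).comp ((LinearMap.mulLeft k (e k x)).comp
        Polynomial.toLaurentAlg.toLinearMap))
      + ((cf k n).comp ((LinearMap.mulLeft k (e k y)).comp
        Polynomial.toLaurentAlg.toLinearMap))
    refine LinearMap.ext fun p => ?_
    simp [map_add, add_mul]
  map_smul' r x := by
    show (cf k n).comp ((LinearMap.mulLeft k (e k (r • x))).comp
        Polynomial.toLaurentAlg.toLinearMap)
      = ((cf k n).comp ((LinearMap.mulLeft k (e k x)).comp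
          Polynomial.toLaurentAlg.toLinearMap)).comp (LinearMap.mulLeft k r)
    refine LinearMap.ext fun p => ?_
    have h1 : e k (r • x) = Polynomial.toLaurent r * e k x := by
      rw [Algebra.smul_def, map_mul, AlgEquiv.commutes,
        LaurentPolynomial.algebraMap_eq_toLaurent]
    simp only [LinearMap.coe_comp, Function.comp_apply, AlgHom.toLinearMap_apply,
      Polynomial.toLaurentAlg_apply, LinearMap.mulLeft_apply, h1, map_mul]
    ring_nf

lemma psiRaw_apply (n : ℕ) (ℓ : L) (p : Polynomial k) :
    (show Polynomial k →ₗ[k] k from psiRaw k n ℓ) p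
      = cf k n (e k ℓ * Polynomial.toLaurent p) := rfl

lemma psiRaw_algebraMap (n : ℕ) (p : Polynomial k) :
    psiRaw k n (algebraMap (Polynomial k) L p) = 0 := by
  show (cf k n).comp ((LinearMap.mulLeft k (e k (algebraMap (Polynomial k) L p))).comp
      Polynomial.toLaurentAlg.toLinearMap) = 0
  refine LinearMap.ext fun q => ?_
  have h1 : e k (algebraMap (Polynomial k) L p) = Polynomial.toLaurent p := by
    rw [AlgEquiv.commutes, LaurentPolynomial.algebraMap_eq_toLaurent]
  simp only [LinearMap.coe_comp, Function.comp_apply, AlgHom.toLinearMap_apply,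
    Polynomial.toLaurentAlg_apply, LinearMap.mulLeft_apply, h1, LinearMap.zero_apply,
    LinearMap.zero_comp]
  rw [← map_mul, cf_toLaurent]

lemma psiRaw_mem (n : ℕ) (ℓ : L) : psiRaw k n ℓ ∈ Dsub := by
  obtain ⟨⟨p, s⟩, h⟩ := IsLocalization.surj (Submonoid.powers (Polynomial.X : Polynomial k)) ℓ
  obtain ⟨m, hm⟩ := s.2
  replace hm : (Polynomial.X : Polynomial k) ^ m = (s : Polynomial k) := hm
  refine ⟨m, ?_⟩
  have h2 : (Polynomial.X : Polynomial k) ^ m • ℓ = algebraMap (Polynomial k) L p := by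
    rw [Algebra.smul_def, hm, ← h, mul_comm]
  calc (Polynomial.X : Polynomial k) ^ m • psiRaw k n ℓ
      = psiRaw k n ((Polynomial.X : Polynomial k) ^ m • ℓ) := (map_smul _ _ _).symm
    _ = 0 := by rw [h2, psiRaw_algebraMap]

/-- The `n`-th component map, valued in the torsion submodule. -/
def psiD (n : ℕ) : L →ₗ[Polynomial k] Dsub :=
  (psiRaw k n).codRestrict _ (psiRaw_mem k n)

lemma psiRaw_eventually_zero (ℓ : L) : ∃ m : ℕ, ∀ n, m ≤ n → psiRaw k n ℓ = 0 := by
  obtain ⟨⟨p, s⟩, h⟩ := IsLocalization.surj (Submonoid.powers (Polynomial.X : Polynomial k)) ℓ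
  obtain ⟨m, hm⟩ := s.2
  replace hm : (Polynomial.X : Polynomial k) ^ m = (s : Polynomial k) := hm
  refine ⟨m, fun n hn => ?_⟩
  have h2 : e k ℓ * LaurentPolynomial.T (m : ℤ) = Polynomial.toLaurent p := by
    have := congrArg (e k) h
    rw [map_mul, AlgEquiv.commutes, AlgEquiv.commutes] at this
    rw [← hm] at this
    simpa [LaurentPolynomial.algebraMap_eq_toLaurent, Polynomial.toLaurent_X_pow] using this
  have h3 : e k ℓ = Polynomial.toLaurent p * LaurentPolynomial.T (-(m : ℤ)) := by
    have := congrArg (· * LaurentPolynomial.T (-(m : ℤ))) h2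
    simpa [LaurentPolynomial.mul_T_assoc] using this
  show (cf k n).comp ((LinearMap.mulLeft k (e k ℓ)).comp
      Polynomial.toLaurentAlg.toLinearMap) = 0
  refine LinearMap.ext fun q => ?_
  simp only [LinearMap.coe_comp, Function.comp_apply, AlgHom.toLinearMap_apply,
    Polynomial.toLaurentAlg_apply, LinearMap.mulLeft_apply, LinearMap.zero_apply,
    LinearMap.zero_comp]
  rw [h3, mul_comm (Polynomial.toLaurent p) _, mul_assoc, ← map_mul,
    mul_comm (LaurentPolynomial.T (-(m : ℤ))) _]
  show (Polynomial.toLaurent (p * q) * LaurentPolynomial.T (-(m : ℤ)) :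
      LaurentPolynomial k).coeff (-(n : ℤ) - 1) = 0
  rw [LaurentPolynomial.T]
  rw [AddMonoidAlgebra.coeff_mul_single_apply]
  rw [toLaurent_apply_neg k _ _ (by omega), zero_mul]

lemma psiD_eventually_zero (ℓ : L) : ∃ m : ℕ, ∀ n, m ≤ n → psiD k n ℓ = 0 := by
  obtain ⟨m, hm⟩ := psiRaw_eventually_zero k ℓ
  exact ⟨m, fun n hn => Subtype.ext (hm n hn)⟩

/-- Bound on the support of the components. -/
def bound (ℓ : L) : ℕ := (psiD_eventually_zero k ℓ).choose

lemma psiD_zero_of_le (ℓ : L) {n : ℕ} (hn : bound k ℓ ≤ n) : psiD k n ℓ = 0 :=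
  (psiD_eventually_zero k ℓ).choose_spec n hn

/-- The underlying function of the linear map not in the image. -/
def PsiFun (ℓ : L) : DirectSum ℕ (fun _ : ℕ => Dsub) :=
  DirectSum.mk (fun _ : ℕ => Dsub) (Finset.range (bound k ℓ)) (fun n => psiD k n.1 ℓ)

lemma PsiFun_apply (ℓ : L) (n : ℕ) : PsiFun k ℓ n = psiD k n ℓ := by
  unfold PsiFun
  by_cases h : n ∈ Finset.range (bound k ℓ)
  · exact DirectSum.mk_apply_of_mem h
  · rw [DirectSum.mk_apply_of_notMem h, psiD_zero_of_le k ℓ (by simpa using h)]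

/-- The linear map `L → ⨁ₙ D` not in the image of the canonical map. -/
def Psi : L →ₗ[Polynomial k] DirectSum ℕ (fun _ : ℕ => Dsub) where
  toFun := PsiFun k
  map_add' x y := by
    refine DFinsupp.ext fun n => ?_
    rw [DirectSum.add_apply, PsiFun_apply, PsiFun_apply, PsiFun_apply, map_add]
  map_smul' r x := by
    refine DFinsupp.ext fun n => ?_
    rw [RingHom.id_apply, DFinsupp.smul_apply, PsiFun_apply, PsiFun_apply, map_smul]

lemma toModule_apply
    (c : DirectSum ℕ (fun _ : ℕ => L →ₗ[Polynomial k] Dsub)) (ℓ : L) (n : ℕ) :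
    (DirectSum.toModule (Polynomial k) ℕ
        (L →ₗ[Polynomial k] DirectSum ℕ (fun _ : ℕ => Dsub))
        (fun m => LinearMap.llcomp (Polynomial k) L Dsub (DirectSum ℕ (fun _ : ℕ => Dsub))
          (DirectSum.lof (Polynomial k) ℕ (fun _ : ℕ => Dsub) m)) c ℓ) n
      = (c n) ℓ := by
  induction c using DirectSum.induction_on with
  | zero => simp
  | of i g =>
    rw [← DirectSum.lof_eq_of (Polynomial k), DirectSum.toModule_lof]
    by_cases h : i = n
    · subst h
      rw [LinearMap.llcomp_apply, DirectSum.lof_apply, DirectSum.lof_apply]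
    · rw [LinearMap.llcomp_apply, DirectSum.lof_eq_of, DirectSum.lof_eq_of,
        DirectSum.of_eq_of_ne _ _ _ (Ne.symm h), DirectSum.of_eq_of_ne _ _ _ (Ne.symm h)]
      rfl
  | add x y hx hy =>
    rw [map_add, LinearMap.add_apply, DirectSum.add_apply, hx, hy,
      DirectSum.add_apply, LinearMap.add_apply]

end

end Stmt16Aux

open Polynomial

/-- for `R = k[X]`, `L = R[1/X]` and `D` the `X`-power-torsion submodule of
`Hom_k(R,k)`, the canonical map `⨁ₙ Hom_R(L, D) → Hom_R(L, ⨁ₙ D)` is not surjective. -/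
theorem stmt16 (k : Type) [Field k] :
    ¬ Function.Surjective
        (DirectSum.toModule (Polynomial k) ℕ
          (Localization.Away (Polynomial.X : Polynomial k) →ₗ[Polynomial k]
            DirectSum ℕ fun _ : ℕ =>
              powerTorsion (Polynomial k) Polynomial.X (KDual k (Polynomial k)))
          (fun n =>
            LinearMap.llcomp (σ₁₂ := RingHom.id (Polynomial k)) (Polynomial k)
              (Localization.Away (Polynomial.X : Polynomial k))
              (powerTorsion (Polynomial k) Polynomial.X (KDual k (Polynomial k)))
              (DirectSum ℕ fun _ : ℕ =>
                powerTorsion (Polynomial k) Polynomial.X (KDual k (Polynomial k)))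
              (DirectSum.lof (Polynomial k) ℕ
                (fun _ : ℕ =>
                  powerTorsion (Polynomial k) Polynomial.X (KDual k (Polynomial k))) n))) := by
  classical
  intro hsurj
  obtain ⟨c, hc⟩ := hsurj (Stmt16Aux.Psi k)
  have key := Stmt16Aux.toModule_apply k c
  -- choose an index outside the support of `c`
  set n : ℕ := (DFinsupp.support c).sup id + 1 with hn
  have hnsupp : n ∉ DFinsupp.support c := by
    intro h
    have := Finset.le_sup (f := id) h
    simp only [id] at this
    omega
  have hcn : c n = 0 := by
    simpa using (DFinsupp.notMem_support_iff).1 hnsupp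
  -- evaluate at the element `T^(-n-1)`
  set ℓ₀ : Localization.Away (Polynomial.X : Polynomial k) :=
    (Stmt16Aux.e k).symm (LaurentPolynomial.T (-(n : ℤ) - 1)) with hℓ₀
  have h1 : (Stmt16Aux.Psi k ℓ₀) n = 0 := by
    rw [← hc, key, hcn]
    rfl
  have h2 : Stmt16Aux.psiD k n ℓ₀ = 0 := by
    rw [← Stmt16Aux.PsiFun_apply]
    exact h1
  have h3 : Stmt16Aux.psiRaw k n ℓ₀ = 0 := congrArg Subtype.val h2
  have h4 : (show Polynomial k →ₗ[k] k from Stmt16Aux.psiRaw k n ℓ₀) 1 = 1 := by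
    rw [Stmt16Aux.psiRaw_apply]
    have : Stmt16Aux.e k ℓ₀ = LaurentPolynomial.T (-(n : ℤ) - 1) := by
      rw [hℓ₀, AlgEquiv.apply_symm_apply]
    rw [this, map_one, mul_one]
    show (LaurentPolynomial.T (-(n : ℤ) - 1) : LaurentPolynomial k).coeff (-(n : ℤ) - 1) = 1
    rw [LaurentPolynomial.T]
    exact Finsupp.single_eq_same
  rw [h3] at h4
  exact one_ne_zero (h4.symm.trans rfl)
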